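/- Let X be a compact metric space, f : X → X continuous, and I, J arcs in X with J free (i.e., J = ψ([0,1]) for a homeomorphism ψ with ψ((0,1)) open in X). Suppose 0 ≤ t₀ ≤ a < b ≤ t₁ ≤ c < d ≤ t₂ ≤ 1 for some 0 ≤ a < b ≤ c < d ≤ 1, and ψ(t₀), ψ(t₁), ψ(t₂) ∈ f(I). Then I f-covers ψ([t₀,t₁]) or I f-covers ψ([t₁,t₂]). -/

import Mathlib

/-- `I` is an arc: a homeomorphic image of `[0,1]`. Since `[0,1]` is compact and `X`
is Hausdorff, a continuous injection suffices. -/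
def IsArc {X : Type*} [TopologicalSpace X] (I : Set X) : Prop :=
  ∃ φ : ℝ → X, ContinuousOn φ (Set.Icc 0 1) ∧ Set.InjOn φ (Set.Icc 0 1) ∧
    φ '' Set.Icc 0 1 = I

/-- `I` is a free arc: an arc whose "interior part" is open in `X`. -/
def IsFreeArc {X : Type*} [TopologicalSpace X] (I : Set X) : Prop :=
  ∃ φ : ℝ → X, ContinuousOn φ (Set.Icc 0 1) ∧ Set.InjOn φ (Set.Icc 0 1) ∧
    φ '' Set.Icc 0 1 = I ∧ IsOpen (φ '' Set.Ioo 0 1)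

/-- `I` `h`-covers `J`: some subarc of `I` is mapped exactly onto `J` by `h`. -/
def Covers {X : Type*} [TopologicalSpace X] (h : X → X) (I J : Set X) : Prop :=
  ∃ K : Set X, IsArc K ∧ K ⊆ I ∧ h '' K = J

open Set

/-- Real covering lemma: if `γ` is continuous on `[p,u]` with `γ p = t₁`, `γ u = t₀`
and `t₀ < t₁`, then some subinterval maps exactly onto `[t₀, t₁]`. -/
lemma real_cover {γ : ℝ → ℝ} {p u t₀ t₁ : ℝ} (hpu : p ≤ u)
    (hγ : ContinuousOn γ (Icc p u)) (hp : γ p = t₁) (hu : γ u = t₀) (h01 : t₀ < t₁) :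
    ∃ α β, p ≤ α ∧ α < β ∧ β ≤ u ∧ γ '' Icc α β = Icc t₀ t₁ := by
  have humem : u ∈ Icc p u := right_mem_Icc.2 hpu
  set S : Set ℝ := Icc p u ∩ γ ⁻¹' {t₀} with hSdef
  have hSclosed : IsClosed S :=
    hγ.preimage_isClosed_of_isClosed isClosed_Icc isClosed_singleton
  have hSne : S.Nonempty := ⟨u, humem, hu⟩
  have hSbdd : BddBelow S := ⟨p, fun x hx => hx.1.1⟩
  have hβmem : sInf S ∈ S := hSclosed.csInf_mem hSne hSbdd
  set β := sInf S with hβdef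
  have hmin : ∀ s ∈ Icc p u, s < β → γ s ≠ t₀ := by
    intro s hs hsβ h
    exact absurd (csInf_le hSbdd ⟨hs, h⟩) (not_le.2 hsβ)
  have hpβ : p ≤ β := hβmem.1.1
  set S₂ : Set ℝ := Icc p β ∩ γ ⁻¹' {t₁} with hS₂def
  have hsub : Icc p β ⊆ Icc p u := Icc_subset_Icc le_rfl hβmem.1.2
  have hS₂closed : IsClosed S₂ :=
    (hγ.mono hsub).preimage_isClosed_of_isClosed isClosed_Icc isClosed_singleton
  have hS₂ne : S₂.Nonempty := ⟨p, ⟨le_rfl, hpβ⟩, hp⟩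
  have hS₂bdd : BddAbove S₂ := ⟨β, fun x hx => hx.1.2⟩
  have hαmem : sSup S₂ ∈ S₂ := hS₂closed.csSup_mem hS₂ne hS₂bdd
  set α := sSup S₂ with hαdef
  have hmax : ∀ s ∈ Icc p β, α < s → γ s ≠ t₁ := by
    intro s hs hαs h
    exact absurd (le_csSup hS₂bdd ⟨hs, h⟩) (not_le.2 hαs)
  have hγα : γ α = t₁ := hαmem.2
  have hγβ : γ β = t₀ := hβmem.2
  have hαβ : α < β := by
    rcases lt_or_eq_of_le hαmem.1.2 with h | h
    · exact h
    · exact absurd (hγα.symm.trans (h ▸ hγβ)) h01.ne'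
  have hpα : p ≤ α := hαmem.1.1
  have hβu : β ≤ u := hβmem.1.2
  refine ⟨α, β, hpα, hαβ, hβu, ?_⟩
  have hsubαβ : Icc α β ⊆ Icc p u := Icc_subset_Icc hpα hβu
  have hcont : ContinuousOn γ (Icc α β) := hγ.mono hsubαβ
  apply Subset.antisymm
  · rintro x ⟨s, hs, rfl⟩
    by_contra hx
    rw [mem_Icc, not_and_or, not_le, not_le] at hx
    rcases hx with hlt | hgt
    · have hsβ : s < β := by
        rcases lt_or_eq_of_le hs.2 with h | h
        · exact h
        · rw [h, hγβ] at hlt; exact absurd hlt (lt_irrefl _)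
      have hiv := intermediate_value_Icc' hs.1
        (hcont.mono (Icc_subset_Icc le_rfl hs.2))
        (⟨hlt.le, hγα ▸ h01.le⟩ : t₀ ∈ Icc (γ s) (γ α))
      obtain ⟨s', hs', hγs'⟩ := hiv
      exact hmin s' ⟨hpα.trans hs'.1, (hs'.2.trans hsβ.le).trans hβu⟩
        (lt_of_le_of_lt hs'.2 hsβ) hγs'
    · have hsα : α < s := by
        rcases lt_or_eq_of_le hs.1 with h | h
        · exact h
        · rw [← h, hγα] at hgt; exact absurd hgt (lt_irrefl _)
      have hiv := intermediate_value_Icc' hs.2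
        (hcont.mono (Icc_subset_Icc hs.1 le_rfl))
        (⟨hγβ ▸ h01.le, hgt.le⟩ : t₁ ∈ Icc (γ β) (γ s))
      obtain ⟨s', hs', hγs'⟩ := hiv
      exact hmax s' ⟨hpα.trans (hsα.le.trans hs'.1), hs'.2⟩ (hsα.trans_le hs'.1) hγs'
  · have := intermediate_value_Icc' hαβ.le hcont
    rw [hγα, hγβ] at this
    exact this

/-- Mirrored version: `γ p = t₁`, `γ u = t₂`, `t₁ < t₂`. -/
lemma real_cover' {γ : ℝ → ℝ} {p u t₁ t₂ : ℝ} (hpu : p ≤ u)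
    (hγ : ContinuousOn γ (Icc p u)) (hp : γ p = t₁) (hu : γ u = t₂) (h12 : t₁ < t₂) :
    ∃ α β, p ≤ α ∧ α < β ∧ β ≤ u ∧ γ '' Icc α β = Icc t₁ t₂ := by
  obtain ⟨α, β, h1, h2, h3, h4⟩ := real_cover (γ := fun s => -γ s) hpu
    (hγ.neg) (by show -γ p = -t₁; rw [hp]) (by show -γ u = -t₂; rw [hu]) (neg_lt_neg h12)
  refine ⟨α, β, h1, h2, h3, ?_⟩
  have : γ '' Icc α β = Neg.neg '' ((fun s => -γ s) '' Icc α β) := by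
    rw [Set.image_image]; simp
  rw [this, h4, Set.image_neg_Icc, neg_neg, neg_neg]

/-- A subinterval image of an arc parametrization is an arc. -/
lemma isArc_subarc {X : Type*} [TopologicalSpace X] {φ : ℝ → X}
    (hc : ContinuousOn φ (Icc 0 1)) (hi : InjOn φ (Icc 0 1)) {α β : ℝ}
    (h0 : 0 ≤ α) (hαβ : α < β) (h1 : β ≤ 1) : IsArc (φ '' Icc α β) := by
  have hsub : Icc α β ⊆ Icc (0:ℝ) 1 := Icc_subset_Icc h0 h1
  have haff : (fun s : ℝ => α + s * (β - α)) '' Icc 0 1 = Icc α β := by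
    rw [show (fun s : ℝ => α + s * (β - α)) =
      (fun x : ℝ => α + x) ∘ (fun s : ℝ => s * (β - α)) from rfl,
      Set.image_comp, Set.image_mul_right_Icc zero_le_one (by linarith),
      Set.image_const_add_Icc]
    norm_num
  have hmaps : ∀ s ∈ Icc (0:ℝ) 1, α + s * (β - α) ∈ Icc α β := by
    intro s hs
    rw [← haff]; exact ⟨s, hs, rfl⟩
  refine ⟨fun s => φ (α + s * (β - α)), ?_, ?_, ?_⟩
  · exact hc.comp ((continuous_const.add (continuous_id.mul continuous_const)).continuousOn)
      (fun s hs => hsub (hmaps s hs))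
  · intro x hx y hy h
    have := hi (hsub (hmaps x hx)) (hsub (hmaps y hy)) h
    have hne : β - α ≠ 0 := by linarith
    exact mul_right_cancel₀ hne (add_left_cancel this)
  · rw [show (fun s : ℝ => φ (α + s * (β - α))) =
      φ ∘ (fun s : ℝ => α + s * (β - α)) from rfl, Set.image_comp, haff]

/-- Continuous inverse of an injective parametrization on a compact interval. -/
lemma inv_continuous {X : Type*} [TopologicalSpace X] [T2Space X] {ψ : ℝ → X}
    (hψc : ContinuousOn ψ (Icc 0 1)) (hψi : InjOn ψ (Icc 0 1)) :
    ∃ ρ : X → ℝ, ContinuousOn ρ (ψ '' Icc 0 1) ∧ ∀ s ∈ Icc (0:ℝ) 1, ρ (ψ s) = s := by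
  classical
  set ψ' : Icc (0:ℝ) 1 → X := (Icc (0:ℝ) 1).restrict ψ with hψ'def
  have hcont : Continuous ψ' := continuousOn_iff_continuous_restrict.mp hψc
  have hinj : Function.Injective ψ' := fun a b h => Subtype.ext (hψi a.2 b.2 h)
  have hemb : Topology.IsEmbedding ψ' := (hcont.isClosedEmbedding hinj).toIsEmbedding
  set e := hemb.toHomeomorph with hedef
  have hrange : Set.range ψ' = ψ '' Icc 0 1 := Set.range_restrict ψ (Icc 0 1)
  refine ⟨fun x => if h : x ∈ Set.range ψ' then ((e.symm ⟨x, h⟩ : Icc (0:ℝ) 1) : ℝ) else 0,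
    ?_, ?_⟩
  · rw [← hrange, continuousOn_iff_continuous_restrict]
    have : (Set.range ψ').restrict
        (fun x => if h : x ∈ Set.range ψ' then ((e.symm ⟨x, h⟩ : Icc (0:ℝ) 1) : ℝ) else 0)
        = fun x : Set.range ψ' => ((e.symm x : Icc (0:ℝ) 1) : ℝ) := by
      funext x
      exact dif_pos x.2
    exact (congrArg Continuous this).mpr (continuous_subtype_val.comp e.symm.continuous)
  · intro s hs
    have hm : ψ s ∈ Set.range ψ' := ⟨⟨s, hs⟩, rfl⟩
    simp only [dif_pos hm]
    have : e.symm ⟨ψ s, hm⟩ = ⟨s, hs⟩ := by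
      apply e.injective
      rw [Homeomorph.apply_symm_apply]
      exact Subtype.ext rfl
    rw [this]

/-- Key covering lemma: walk from a point of `G` hitting `ψ t₁` to one hitting `ψ t₀`;
before leaving the open middle part of the free arc, `G` sweeps out `ψ [t₀,t₁]`
or `ψ [t₁,t₂]`. -/
lemma key_cover {X : Type*} [TopologicalSpace X] [T2Space X]
    (ψ : ℝ → X) (hψc : ContinuousOn ψ (Icc 0 1)) (hψi : InjOn ψ (Icc 0 1))
    (hψo : IsOpen (ψ '' Ioo 0 1))
    {t₀ t₁ t₂ : ℝ} (ht0 : 0 ≤ t₀) (h01 : t₀ < t₁) (h12 : t₁ < t₂) (ht2 : t₂ ≤ 1)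
    (G : ℝ → X) {p q : ℝ} (hpq : p ≤ q) (hG : ContinuousOn G (Icc p q))
    (hGp : G p = ψ t₁) (hGq : G q = ψ t₀) :
    ∃ α β, p ≤ α ∧ α < β ∧ β ≤ q ∧
      (G '' Icc α β = ψ '' Icc t₀ t₁ ∨ G '' Icc α β = ψ '' Icc t₁ t₂) := by
  have hsub02 : Icc t₀ t₂ ⊆ Icc (0:ℝ) 1 := Icc_subset_Icc ht0 ht2
  have hIoo : Ioo t₀ t₂ ⊆ Icc (0:ℝ) 1 := Ioo_subset_Icc_self.trans hsub02
  have ht0m : t₀ ∈ Icc (0:ℝ) 1 := ⟨le_refl 0 |>.trans ht0, by linarith⟩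
  have ht1m : t₁ ∈ Icc (0:ℝ) 1 := ⟨by linarith, by linarith⟩
  have ht2m : t₂ ∈ Icc (0:ℝ) 1 := ⟨by linarith, ht2⟩
  set W := ψ '' Ioo t₀ t₂ with hWdef
  -- W is open
  have hWopen : IsOpen W := by
    have hU : Icc 0 t₀ ∪ Icc t₂ 1 ⊆ Icc (0:ℝ) 1 := by
      intro x hx
      rcases hx with h | h
      · exact ⟨h.1, by linarith [h.2]⟩
      · exact ⟨by linarith [h.1], h.2⟩
    have hCcpt : IsCompact (ψ '' (Icc 0 t₀ ∪ Icc t₂ 1)) :=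
      (isCompact_Icc.union isCompact_Icc).image_of_continuousOn (hψc.mono hU)
    have hWeq : W = ψ '' Ioo 0 1 \ ψ '' (Icc 0 t₀ ∪ Icc t₂ 1) := by
      ext x
      constructor
      · rintro ⟨s, hs, rfl⟩
        have hs01 : s ∈ Ioo (0:ℝ) 1 := ⟨lt_of_le_of_lt ht0 hs.1, lt_of_lt_of_le hs.2 ht2⟩
        refine ⟨⟨s, hs01, rfl⟩, ?_⟩
        rintro ⟨r, hr, hrs⟩
        have hr01 : r ∈ Icc (0:ℝ) 1 := hU hr
        have hreq : r = s := hψi hr01 (hIoo hs) hrs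
        rcases hr with h | h
        · have := h.2; rw [hreq] at this; linarith [hs.1]
        · have := h.1; rw [hreq] at this; linarith [hs.2]
      · rintro ⟨⟨s, hs, rfl⟩, hnot⟩
        refine ⟨s, ?_, rfl⟩
        by_contra hcon
        rw [mem_Ioo, not_and_or, not_lt, not_lt] at hcon
        apply hnot
        rcases hcon with h | h
        · exact ⟨s, Or.inl ⟨hs.1.le, h⟩, rfl⟩
        · exact ⟨s, Or.inr ⟨h, hs.2.le⟩, rfl⟩
    rw [hWeq]
    exact hψo.sdiff hCcpt.isClosed
  have ht₁W : ψ t₁ ∈ W := ⟨t₁, ⟨h01, h12⟩, rfl⟩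
  have ht₀W : ψ t₀ ∉ W := by
    rintro ⟨s, hs, hscontra⟩
    have := hψi (hIoo hs) ht0m hscontra
    linarith [hs.1]
  set S := Icc p q ∩ G ⁻¹' Wᶜ with hSdef
  have hSclosed : IsClosed S :=
    hG.preimage_isClosed_of_isClosed isClosed_Icc (isClosed_compl_iff.2 hWopen)
  have hSne : S.Nonempty := ⟨q, right_mem_Icc.2 hpq, by simpa [hGq] using ht₀W⟩
  have hSbdd : BddBelow S := ⟨p, fun x hx => hx.1.1⟩
  have humem : sInf S ∈ S := hSclosed.csInf_mem hSne hSbdd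
  set u := sInf S with hudef
  have hpu : p ≤ u := humem.1.1
  have huq : u ≤ q := humem.1.2
  have hpu' : p < u := by
    rcases lt_or_eq_of_le hpu with h | h
    · exact h
    · exfalso; apply humem.2; show G u ∈ W; rw [← h, hGp]; exact ht₁W
  have hminu : ∀ s ∈ Ico p u, G s ∈ W := by
    intro s hs
    by_contra h
    exact absurd (csInf_le hSbdd ⟨⟨hs.1, hs.2.le.trans huq⟩, h⟩) (not_le.2 hs.2)
  have hKcl : IsClosed (ψ '' Icc t₀ t₂) :=
    (isCompact_Icc.image_of_continuousOn (hψc.mono hsub02)).isClosed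
  have hGu : G u ∈ ψ '' Icc t₀ t₂ := by
    have hcu : ContinuousWithinAt G (Ico p u) u :=
      (hG.continuousWithinAt ⟨hpu, huq⟩).mono
        (fun x hx => ⟨hx.1, hx.2.le.trans huq⟩)
    have hucl : u ∈ closure (Ico p u) := by
      rw [closure_Ico hpu'.ne]
      exact right_mem_Icc.2 hpu
    have h1 : G u ∈ closure (G '' Ico p u) := hcu.mem_closure_image hucl
    have h2 : closure (G '' Ico p u) ⊆ closure W :=
      closure_mono (fun x ⟨s, hs, hxs⟩ => hxs ▸ hminu s hs)
    have h3 : closure W ⊆ ψ '' Icc t₀ t₂ :=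
      closure_minimal (image_mono (f := ψ) Ioo_subset_Icc_self) hKcl
    exact h3 (h2 h1)
  have himg : ∀ s ∈ Icc p u, G s ∈ ψ '' Icc t₀ t₂ := by
    intro s hs
    rcases lt_or_eq_of_le hs.2 with h | h
    · exact image_mono (f := ψ) Ioo_subset_Icc_self (hminu s ⟨hs.1, h⟩)
    · rw [h]; exact hGu
  obtain ⟨ρ, hρc, hρinv⟩ := inv_continuous hψc hψi
  set γ : ℝ → ℝ := fun s => ρ (G s) with hγdef
  have hγcont : ContinuousOn γ (Icc p u) := by
    apply hρc.comp (hG.mono (Icc_subset_Icc le_rfl huq))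
    intro s hs
    exact image_mono (f := ψ) hsub02 (himg s hs)
  have hGψγ : ∀ s ∈ Icc p u, G s = ψ (γ s) ∧ γ s ∈ Icc t₀ t₂ := by
    intro s hs
    obtain ⟨r, hr, hGr⟩ := himg s hs
    have : γ s = r := by rw [hγdef]; simp only [← hGr]; exact hρinv r (hsub02 hr)
    rw [this, hGr]
    exact ⟨rfl, hr⟩
  have hγp : γ p = t₁ := by
    rw [hγdef]; simp only [hGp]; exact hρinv t₁ ht1m
  obtain ⟨r, hr, hGur⟩ := hGu
  have hγu : γ u = r := by
    rw [hγdef]; simp only [← hGur]; exact hρinv r (hsub02 hr)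
  have hrcase : r = t₀ ∨ r = t₂ := by
    by_contra h
    rw [not_or] at h
    have hrIoo : r ∈ Ioo t₀ t₂ :=
      ⟨lt_of_le_of_ne hr.1 (Ne.symm h.1), lt_of_le_of_ne hr.2 h.2⟩
    exact humem.2 (show G u ∈ W from hGur ▸ ⟨r, hrIoo, rfl⟩)
  have htransfer : ∀ α β, p ≤ α → β ≤ u → α ≤ β →
      G '' Icc α β = ψ '' (γ '' Icc α β) := by
    intro α β hα hβ hαβ
    have hmem : ∀ s ∈ Icc α β, s ∈ Icc p u := fun s hs => ⟨hα.trans hs.1, hs.2.trans hβ⟩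
    ext x
    simp only [mem_image]
    constructor
    · rintro ⟨s, hs, rfl⟩
      exact ⟨γ s, ⟨s, hs, rfl⟩, ((hGψγ s (hmem s hs)).1).symm⟩
    · rintro ⟨y, ⟨s, hs, rfl⟩, rfl⟩
      exact ⟨s, hs, (hGψγ s (hmem s hs)).1⟩
  rcases hrcase with rfl | rfl
  · obtain ⟨α, β, h1, h2, h3, h4⟩ := real_cover hpu hγcont hγp hγu h01
    refine ⟨α, β, h1, h2, h3.trans huq, Or.inl ?_⟩
    rw [htransfer α β h1 h3 h2.le, h4]
  · obtain ⟨α, β, h1, h2, h3, h4⟩ := real_cover' hpu hγcont hγp hγu h12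
    refine ⟨α, β, h1, h2, h3.trans huq, Or.inr ?_⟩
    rw [htransfer α β h1 h3 h2.le, h4]

theorem stmt_19 {X : Type*} [MetricSpace X] [CompactSpace X]
    (f : X → X) (hf : Continuous f)
    (I J : Set X) (hI : IsArc I)
    (ψ : ℝ → X) (hψc : ContinuousOn ψ (Set.Icc 0 1)) (hψi : Set.InjOn ψ (Set.Icc 0 1))
    (hψJ : ψ '' Set.Icc 0 1 = J) (hψo : IsOpen (ψ '' Set.Ioo 0 1))
    (a b c d t₀ t₁ t₂ : ℝ)
    (h0 : 0 ≤ t₀) (ht₀a : t₀ ≤ a) (hab : a < b) (hbt₁ : b ≤ t₁) (ht₁c : t₁ ≤ c)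
    (hcd : c < d) (hdt₂ : d ≤ t₂) (ht₂ : t₂ ≤ 1)
    (h₀ : ψ t₀ ∈ f '' I) (h₁ : ψ t₁ ∈ f '' I) (h₂ : ψ t₂ ∈ f '' I) :
    Covers f I (ψ '' Set.Icc t₀ t₁) ∨ Covers f I (ψ '' Set.Icc t₁ t₂) := by
  obtain ⟨φ, hφc, hφi, hφI⟩ := hI
  have h01 : t₀ < t₁ := by linarith
  have h12 : t₁ < t₂ := by linarith
  obtain ⟨x1, hx1I, hx1⟩ := h₁
  rw [← hφI] at hx1I
  obtain ⟨sp, hsp, rfl⟩ := hx1I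
  obtain ⟨x0, hx0I, hx0⟩ := h₀
  rw [← hφI] at hx0I
  obtain ⟨s0, hs0, rfl⟩ := hx0I
  set G : ℝ → X := fun s => f (φ s) with hGdef
  have hGc : ContinuousOn G (Icc 0 1) := hf.comp_continuousOn hφc
  have hne : sp ≠ s0 := by
    rintro rfl
    have : t₁ = t₀ := hψi ⟨by linarith, by linarith⟩ ⟨by linarith, by linarith⟩
      (hx1.symm.trans hx0)
    linarith
  -- helper to conclude from a subinterval of [0,1]
  have conclude : ∀ α β : ℝ, 0 ≤ α → α < β → β ≤ 1 →
      (G '' Icc α β = ψ '' Icc t₀ t₁ ∨ G '' Icc α β = ψ '' Icc t₁ t₂) →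
      Covers f I (ψ '' Set.Icc t₀ t₁) ∨ Covers f I (ψ '' Set.Icc t₁ t₂) := by
    intro α β h0α hαβ hβ1 hcases
    have hK : IsArc (φ '' Icc α β) := isArc_subarc hφc hφi h0α hαβ hβ1
    have hKsub : φ '' Icc α β ⊆ I := hφI ▸ image_mono (f := φ) (Icc_subset_Icc h0α hβ1)
    have hfK : f '' (φ '' Icc α β) = G '' Icc α β := by
      rw [image_image]
    rcases hcases with hc | hc
    · exact Or.inl ⟨_, hK, hKsub, by rw [hfK, hc]⟩
    · exact Or.inr ⟨_, hK, hKsub, by rw [hfK, hc]⟩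
  rcases hne.lt_or_gt with h | h
  · obtain ⟨α, β, hα, hαβ, hβ, hcases⟩ := key_cover ψ hψc hψi hψo h0 h01 h12 ht₂ G h.le
      (hGc.mono (Icc_subset_Icc hsp.1 hs0.2)) hx1 hx0
    exact conclude α β (hsp.1.trans hα) hαβ (hβ.trans hs0.2) hcases
  · set G' : ℝ → X := fun s => G (sp + s0 - s) with hG'def
    have hmaps : ∀ s ∈ Icc s0 sp, sp + s0 - s ∈ Icc s0 sp := by
      intro s hs
      exact ⟨by linarith [hs.2], by linarith [hs.1]⟩
    have hsub01 : Icc s0 sp ⊆ Icc (0:ℝ) 1 := Icc_subset_Icc hs0.1 hsp.2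
    have hG'c : ContinuousOn G' (Icc s0 sp) := by
      apply (hGc.mono hsub01).comp
        ((continuous_const.sub continuous_id).continuousOn)
      intro s hs
      exact hmaps s hs
    have hG'p : G' s0 = ψ t₁ := by
      rw [hG'def]
      simp only []
      rw [show sp + s0 - s0 = sp by ring]
      exact hx1
    have hG'q : G' sp = ψ t₀ := by
      rw [hG'def]
      simp only []
      rw [show sp + s0 - sp = s0 by ring]
      exact hx0
    obtain ⟨α, β, hα, hαβ, hβ, hcases⟩ := key_cover ψ hψc hψi hψo h0 h01 h12 ht₂ G' h.le
      hG'c hG'p hG'q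
    have himg : G '' Icc (sp + s0 - β) (sp + s0 - α) = G' '' Icc α β := by
      rw [hG'def]
      rw [show (fun s => G (sp + s0 - s)) = G ∘ (fun s : ℝ => sp + s0 - s) from rfl,
        Set.image_comp, Set.image_const_sub_Icc]
    refine conclude (sp + s0 - β) (sp + s0 - α) ?_ (by linarith) ?_ ?_
    · have := hβ; have := hs0.1; linarith [hsp.2]
    · have := hα; have := hsp.2; linarith [hs0.1]
    · rw [himg]; exact hcases
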